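/- Let G ∈ ℝ^{m×m} and P ∈ ℝ^{m×m} symmetric positive definite, and suppose there is β > 0 with yᵀ(PG + GᵀP)y ≥ β·yᵀPy for all y ∈ ℝ^m. For θ ≠ 0 let ‖θ‖_d = e^{s_θ}, where s_θ is the unique real with ‖exp(−s_θ G)θ‖_P = 1, and set ‖0‖_d = 0. If μ > −β/2, then the map θ ↦ ‖θ‖_d^{μ}·θ (defined as 0 at θ = 0) is continuous at θ = 0, i.e. ‖θ‖_d^{μ}·|θ| → 0 as θ → 0. -/

import Mathlib

/-
Statement 9 (Appendix A continuity of the consensus term θ ↦ ‖θ‖_d^μ θ at 0).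
-/

open Matrix Filter

/-- The Euclidean norm of a finitely-indexed real vector. -/
noncomputable def euclNorm {ι : Type*} [Fintype ι] (x : ι → ℝ) : ℝ :=
  Real.sqrt (x ⬝ᵥ x)

/-- The weighted Euclidean norm ‖x‖_P = √(xᵀPx). -/
noncomputable def wnorm {ι : Type*} [Fintype ι] (P : Matrix ι ι ℝ) (x : ι → ℝ) : ℝ :=
  Real.sqrt (x ⬝ᵥ P.mulVec x)

open NormedSpace


lemma cont_quad {m : ℕ} (A : Matrix (Fin m) (Fin m) ℝ) :
    Continuous (fun y : Fin m → ℝ => y ⬝ᵥ A.mulVec y) := by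
  simp only [dotProduct, Matrix.mulVec]
  fun_prop

lemma quad_upper {m : ℕ} (A : Matrix (Fin m) (Fin m) ℝ) :
    ∃ C : ℝ, 0 ≤ C ∧ ∀ y : Fin m → ℝ, y ⬝ᵥ A.mulVec y ≤ C * (y ⬝ᵥ y) := by
  refine ⟨∑ i, ∑ j, |A i j|, by positivity, fun y => ?_⟩
  have hyy : ∀ i : Fin m, y i ^ 2 ≤ y ⬝ᵥ y := by
    intro i
    simpa [dotProduct, sq] using
      Finset.single_le_sum (f := fun j => y j * y j) (fun j _ => mul_self_nonneg _)
        (Finset.mem_univ i)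
  have hkey : ∀ i j, y i * (A i j * y j) ≤ |A i j| * (y ⬝ᵥ y) := by
    intro i j
    have h1 := hyy i; have h2 := hyy j
    have : |y i * y j| ≤ y ⬝ᵥ y := by
      rw [abs_mul]
      nlinarith [abs_nonneg (y i), abs_nonneg (y j), sq_abs (y i), sq_abs (y j)]
    calc y i * (A i j * y j) = A i j * (y i * y j) := by ring
      _ ≤ |A i j * (y i * y j)| := le_abs_self _
      _ = |A i j| * |y i * y j| := abs_mul _ _
      _ ≤ |A i j| * (y ⬝ᵥ y) := by
          exact mul_le_mul_of_nonneg_left this (abs_nonneg _)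
  calc y ⬝ᵥ A.mulVec y = ∑ i, ∑ j, y i * (A i j * y j) := by
        simp [dotProduct, Matrix.mulVec, Finset.mul_sum]
    _ ≤ ∑ i, ∑ j, |A i j| * (y ⬝ᵥ y) :=
        Finset.sum_le_sum fun i _ => Finset.sum_le_sum fun j _ => hkey i j
    _ = (∑ i, ∑ j, |A i j|) * (y ⬝ᵥ y) := by rw [Finset.sum_mul]; simp [Finset.sum_mul]

lemma quad_lower {m : ℕ} {P : Matrix (Fin m) (Fin m) ℝ} (hP : P.PosDef) :
    ∃ c : ℝ, 0 < c ∧ ∀ y : Fin m → ℝ, c * (y ⬝ᵥ y) ≤ y ⬝ᵥ P.mulVec y := by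
  have hPpos : ∀ y : Fin m → ℝ, y ≠ 0 → 0 < y ⬝ᵥ P.mulVec y := by
    intro y hy
    simpa using hP.dotProduct_mulVec_pos hy
  have hself : ∀ y : Fin m → ℝ, (∀ i, y i ^ 2 ≤ y ⬝ᵥ y) ∧ 0 ≤ y ⬝ᵥ y := by
    intro y
    constructor
    · intro i
      simpa [dotProduct, sq] using
        Finset.single_le_sum (f := fun j => y j * y j) (fun j _ => mul_self_nonneg _)
          (Finset.mem_univ i)
    · exact Finset.sum_nonneg fun j _ => mul_self_nonneg _
  rcases isEmpty_or_nonempty (Fin m) with hE | hNE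
  · exact ⟨1, one_pos, fun y => by simp [dotProduct]⟩
  have hcs : Continuous (fun x : Fin m → ℝ => x ⬝ᵥ x) := by
    simp only [dotProduct]; fun_prop
  set S : Set (Fin m → ℝ) := {x | x ⬝ᵥ x = 1} with hSdef
  have hSc : IsCompact S := by
    apply Metric.isCompact_of_isClosed_isBounded
    · exact isClosed_eq hcs continuous_const
    · apply Bornology.IsBounded.subset (Metric.isBounded_closedBall (x := (0 : Fin m → ℝ)) (r := 1))
      intro x hx
      simp only [Metric.mem_closedBall, dist_zero_right]
      rw [pi_norm_le_iff_of_nonneg zero_le_one]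
      intro i
      have := (hself x).1 i
      rw [hx] at this
      rw [Real.norm_eq_abs, ← Real.sqrt_one, ← Real.sqrt_sq_eq_abs]
      exact Real.sqrt_le_sqrt this
  have hSne : S.Nonempty := by
    obtain ⟨i⟩ := hNE
    refine ⟨Pi.single i 1, ?_⟩
    simp [hSdef, dotProduct, Pi.single_apply, Finset.sum_ite_eq']
  obtain ⟨x₀, hx₀S, hx₀min⟩ := hSc.exists_isMinOn hSne (cont_quad P).continuousOn
  have hx₀ne : x₀ ≠ 0 := by
    intro h
    rw [h] at hx₀S
    simp [hSdef, dotProduct] at hx₀S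
  refine ⟨x₀ ⬝ᵥ P.mulVec x₀, hPpos x₀ hx₀ne, fun y => ?_⟩
  rcases eq_or_ne y 0 with rfl | hy
  · simp
  · have hyy : 0 < y ⬝ᵥ y := by
      rcases lt_or_eq_of_le (hself y).2 with h | h
      · exact h
      · exfalso; apply hy
        funext i
        have h1 := (hself y).1 i
        rw [← h] at h1
        have : y i ^ 2 = 0 := le_antisymm h1 (sq_nonneg _)
        simpa using pow_eq_zero_iff (n := 2) (by norm_num) |>.mp this
    set r : ℝ := Real.sqrt (y ⬝ᵥ y) with hr
    have hrpos : 0 < r := Real.sqrt_pos.mpr hyy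
    have hr2 : r ^ 2 = y ⬝ᵥ y := Real.sq_sqrt (hself y).2
    have hmem : (r⁻¹ • y) ∈ S := by
      simp only [hSdef, Set.mem_setOf_eq, smul_dotProduct, dotProduct_smul,
        smul_eq_mul]
      field_simp
      rw [← hr2]
    have := hx₀min hmem
    simp only [Set.mem_setOf_eq] at this
    have hexp : (r⁻¹ • y) ⬝ᵥ P.mulVec (r⁻¹ • y) = r⁻¹ ^ 2 * (y ⬝ᵥ P.mulVec y) := by
      rw [Matrix.mulVec_smul, smul_dotProduct, dotProduct_smul]
      simp [smul_eq_mul]; ring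
    rw [hexp] at this
    have h2 : (x₀ ⬝ᵥ P.mulVec x₀) * (y ⬝ᵥ y) ≤ (y ⬝ᵥ P.mulVec y) := by
      have := mul_le_mul_of_nonneg_left this (le_of_lt (by positivity : (0:ℝ) < r ^ 2))
      calc (x₀ ⬝ᵥ P.mulVec x₀) * (y ⬝ᵥ y) = r ^ 2 * (x₀ ⬝ᵥ P.mulVec x₀) := by rw [hr2]; ring
        _ ≤ r ^ 2 * (r⁻¹ ^ 2 * (y ⬝ᵥ P.mulVec y)) := this
        _ = (y ⬝ᵥ P.mulVec y) := by field_simp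
    linarith

variable {m : ℕ}

noncomputable def uu (G : Matrix (Fin m) (Fin m) ℝ) (z : Fin m → ℝ) (t : ℝ) : Fin m → ℝ :=
  (exp (t • G)).mulVec z

lemma hasDerivAt_uu (G : Matrix (Fin m) (Fin m) ℝ) (z : Fin m → ℝ) (t : ℝ) :
    HasDerivAt (uu G z) (G.mulVec (uu G z t)) t := by
  letI : SeminormedRing (Matrix (Fin m) (Fin m) ℝ) := Matrix.linftyOpSemiNormedRing
  letI : NormedRing (Matrix (Fin m) (Fin m) ℝ) := Matrix.linftyOpNormedRing
  letI : NormedAlgebra ℝ (Matrix (Fin m) (Fin m) ℝ) := Matrix.linftyOpNormedAlgebra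
  haveI : CompleteSpace (Matrix (Fin m) (Fin m) ℝ) := FiniteDimensional.complete ℝ _
  have hE : HasDerivAt (fun t : ℝ => exp (t • G)) (G * exp (t • G)) t :=
    hasDerivAt_exp_smul_const' G t
  let L : Matrix (Fin m) (Fin m) ℝ →ₗ[ℝ] (Fin m → ℝ) :=
    { toFun := fun A => A.mulVec z
      map_add' := fun A B => Matrix.add_mulVec A B z
      map_smul' := fun c A => Matrix.smul_mulVec c A z }
  have hL := (LinearMap.toContinuousLinearMap L).hasFDerivAt
    (x := exp (t • G))
  have := hL.comp_hasDerivAt t hE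
  have heq : (LinearMap.toContinuousLinearMap L) (G * exp (t • G)) = G.mulVec (uu G z t) := by
    show (G * exp (t • G)).mulVec z = _
    rw [← Matrix.mulVec_mulVec]
    rfl
  exact this.congr_deriv heq

lemma hasDerivAt_quadform (P : Matrix (Fin m) (Fin m) ℝ) {u : ℝ → (Fin m → ℝ)}
    {u' : Fin m → ℝ} {t : ℝ} (hu : HasDerivAt u u' t) :
    HasDerivAt (fun t => u t ⬝ᵥ P.mulVec (u t))
      (u' ⬝ᵥ P.mulVec (u t) + u t ⬝ᵥ P.mulVec u') t := by
  have hcomp : ∀ i, HasDerivAt (fun t => u t i) (u' i) t := hasDerivAt_pi.mp hu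
  have hP : ∀ i, HasDerivAt (fun t => (P.mulVec (u t)) i) ((P.mulVec u') i) t := by
    intro i
    simp only [Matrix.mulVec, dotProduct]
    exact HasDerivAt.fun_sum fun j _ => (hcomp j).const_mul (P i j)
  have : HasDerivAt (fun t => ∑ i, u t i * (P.mulVec (u t)) i)
      (∑ i, (u' i * (P.mulVec (u t)) i + u t i * (P.mulVec u') i)) t :=
    HasDerivAt.fun_sum fun i _ => (hcomp i).mul (hP i)
  simpa [dotProduct, Finset.sum_add_distrib] using this

lemma deriv_eq_Q (G P : Matrix (Fin m) (Fin m) ℝ) (u : Fin m → ℝ) :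
    (G.mulVec u) ⬝ᵥ P.mulVec u + u ⬝ᵥ P.mulVec (G.mulVec u)
      = u ⬝ᵥ (P * G + Gᵀ * P).mulVec u := by
  rw [Matrix.add_mulVec, dotProduct_add, ← Matrix.mulVec_mulVec, ← Matrix.mulVec_mulVec]
  rw [Matrix.dotProduct_mulVec u Gᵀ, Matrix.vecMul_transpose]
  ring

lemma expMul_monotone {f f' : ℝ → ℝ} (hf : ∀ t, HasDerivAt f (f' t) t) {b : ℝ}
    (h : ∀ t, b * f t ≤ f' t) : Monotone (fun t => Real.exp (-b * t) * f t) := by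
  have hg : ∀ t, HasDerivAt (fun t => Real.exp (-b * t) * f t)
      ((-b * Real.exp (-b * t)) * f t + Real.exp (-b * t) * f' t) t := by
    intro t
    have he : HasDerivAt (fun t : ℝ => Real.exp (-b * t)) (-b * Real.exp (-b * t)) t := by
      have h1 : HasDerivAt (fun t : ℝ => -b * t) (-b) t := by
        simpa using (hasDerivAt_id t).const_mul (-b)
      simpa [mul_comm] using h1.exp
    exact he.mul (hf t)
  apply monotone_of_deriv_nonneg (fun t => (hg t).differentiableAt)
  intro t
  rw [(hg t).deriv]
  have := h t
  have hep := Real.exp_pos (-b * t)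
  nlinarith

lemma expMul_antitone {f f' : ℝ → ℝ} (hf : ∀ t, HasDerivAt f (f' t) t) {b : ℝ}
    (h : ∀ t, f' t ≤ b * f t) : Antitone (fun t => Real.exp (-b * t) * f t) := by
  have hg : ∀ t, HasDerivAt (fun t => Real.exp (-b * t) * f t)
      ((-b * Real.exp (-b * t)) * f t + Real.exp (-b * t) * f' t) t := by
    intro t
    have h1 : HasDerivAt (fun t : ℝ => -b * t) (-b) t := by
      simpa using (hasDerivAt_id t).const_mul (-b)
    have he : HasDerivAt (fun t : ℝ => Real.exp (-b * t)) (-b * Real.exp (-b * t)) t := by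
      simpa [mul_comm] using h1.exp
    exact he.mul (hf t)
  apply antitone_of_deriv_nonpos (fun t => (hg t).differentiableAt)
  intro t
  rw [(hg t).deriv]
  have := h t
  have hep := Real.exp_pos (-b * t)
  nlinarith

lemma key_estimate (G P : Matrix (Fin m) (Fin m) ℝ)
    (hPnn : ∀ y : Fin m → ℝ, 0 ≤ y ⬝ᵥ P.mulVec y)
    (β L : ℝ) (hβ : 0 < β) (hβL : β ≤ L)
    (hlow : ∀ y : Fin m → ℝ,
      β * (y ⬝ᵥ P.mulVec y) ≤ y ⬝ᵥ (P * G + Gᵀ * P).mulVec y)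
    (hup : ∀ y : Fin m → ℝ,
      y ⬝ᵥ (P * G + Gᵀ * P).mulVec y ≤ L * (y ⬝ᵥ P.mulVec y))
    (θ : Fin m → ℝ) (hθ : θ ≠ 0) (d : ℝ) (hd : 0 < d)
    (hspec : wnorm P ((exp ((-Real.log d) • G)).mulVec θ) = 1)
    (hsmall : θ ⬝ᵥ P.mulVec θ < 1) :
    d < 1 ∧ d ^ L ≤ θ ⬝ᵥ P.mulVec θ ∧ θ ⬝ᵥ P.mulVec θ ≤ d ^ β := by
  set s : ℝ := Real.log d with hs
  set z : Fin m → ℝ := (exp ((-s) • G)).mulVec θ with hz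
  set f : ℝ → ℝ := fun t => uu G z t ⬝ᵥ P.mulVec (uu G z t) with hf
  have hz1 : z ⬝ᵥ P.mulVec z = 1 := by
    have h := hspec
    rw [wnorm] at h
    have := hPnn z
    nlinarith [Real.sq_sqrt this, h]
  have hf0 : f 0 = 1 := by
    have : uu G z 0 = z := by
      rw [uu, zero_smul, NormedSpace.exp_zero, Matrix.one_mulVec]
    rw [hf]; simp only [this, hz1]
  have hfs : f s = θ ⬝ᵥ P.mulVec θ := by
    have : uu G z s = θ := by
      rw [uu, hz, Matrix.mulVec_mulVec, ← Matrix.exp_add_of_commute]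
      · rw [← add_smul]
        simp
      · exact ((Commute.refl G).smul_left s).smul_right (-s)
    show uu G z s ⬝ᵥ P.mulVec (uu G z s) = _
    rw [this]
  have hf' : ∀ t, HasDerivAt f
      (uu G z t ⬝ᵥ (P * G + Gᵀ * P).mulVec (uu G z t)) t := by
    intro t
    have := hasDerivAt_quadform P (hasDerivAt_uu G z t)
    rwa [deriv_eq_Q] at this
  have hmono := expMul_monotone hf' (b := β) (fun t => hlow (uu G z t))
  have hanti := expMul_antitone hf' (b := L) (fun t => hup (uu G z t))
  have hfs_nn : 0 ≤ f s := hPnn _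
  have hs_neg : s < 0 := by
    by_contra h
    push_neg at h
    have h1 := hmono h
    simp only at h1
    rw [mul_zero, Real.exp_zero, one_mul, hf0] at h1
    have h2 : Real.exp (-β * s) ≤ 1 := by
      rw [Real.exp_le_one_iff]
      nlinarith
    nlinarith [hfs, hsmall, Real.exp_pos (-β * s)]
  have hd1 : d < 1 := by
    have : Real.exp s < Real.exp 0 := Real.exp_lt_exp.mpr hs_neg
    rwa [Real.exp_log hd, Real.exp_zero] at this
  refine ⟨hd1, ?_, ?_⟩
  · have h1 := hanti (le_of_lt hs_neg)
    simp only at h1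
    rw [mul_zero, Real.exp_zero, one_mul, hf0] at h1
    have h2 : Real.exp (L * s) ≤ f s := by
      have hm := mul_le_mul_of_nonneg_left h1 (le_of_lt (Real.exp_pos (L * s)))
      have hee : Real.exp (L * s) * Real.exp (-L * s) = 1 := by
        rw [← Real.exp_add]; norm_num
      nlinarith
    rw [hfs] at h2
    rwa [Real.rpow_def_of_pos hd, mul_comm]
  · have h1 := hmono (le_of_lt hs_neg)
    simp only at h1
    rw [mul_zero, Real.exp_zero, one_mul, hf0] at h1
    have h2 : f s ≤ Real.exp (β * s) := by
      have hm := mul_le_mul_of_nonneg_left h1 (le_of_lt (Real.exp_pos (β * s)))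
      have hee : Real.exp (β * s) * Real.exp (-β * s) = 1 := by
        rw [← Real.exp_add]; norm_num
      nlinarith
    rw [hfs] at h2
    rwa [Real.rpow_def_of_pos hd, mul_comm]

theorem consensus_term_continuous_at_zero
    (m : ℕ) (G P : Matrix (Fin m) (Fin m) ℝ)
    (hP : P.PosDef)
    (β : ℝ) (hβ : 0 < β)
    (hlow : ∀ y : Fin m → ℝ,
      β * (y ⬝ᵥ P.mulVec y) ≤ y ⬝ᵥ (P * G + Gᵀ * P).mulVec y)
    (dnorm : (Fin m → ℝ) → ℝ)
    (hd0 : dnorm 0 = 0)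
    (hdpos : ∀ θ : Fin m → ℝ, θ ≠ 0 → 0 < dnorm θ)
    (hdspec : ∀ θ : Fin m → ℝ, θ ≠ 0 →
      wnorm P ((NormedSpace.exp ((-Real.log (dnorm θ)) • G)).mulVec θ) = 1)
    (μ : ℝ) (hμ : -β / 2 < μ) :
    Tendsto (fun θ : Fin m → ℝ => dnorm θ ^ μ * euclNorm θ) (nhds 0) (nhds 0) := by
  obtain ⟨c₁, hc₁, hlowP⟩ := quad_lower hP
  obtain ⟨CQ, hCQ0, hQup⟩ := quad_upper (P * G + Gᵀ * P)
  have hddnn : ∀ y : Fin m → ℝ, 0 ≤ y ⬝ᵥ y :=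
    fun y => Finset.sum_nonneg fun j _ => mul_self_nonneg _
  have hPnn : ∀ y : Fin m → ℝ, 0 ≤ y ⬝ᵥ P.mulVec y :=
    fun y => le_trans (mul_nonneg hc₁.le (hddnn y)) (hlowP y)
  set L : ℝ := max β (CQ / c₁) with hLdef
  have hβL : β ≤ L := le_max_left _ _
  have hLpos : 0 < L := lt_of_lt_of_le hβ hβL
  have hQle : ∀ y : Fin m → ℝ,
      y ⬝ᵥ (P * G + Gᵀ * P).mulVec y ≤ L * (y ⬝ᵥ P.mulVec y) := by
    intro y
    have h1 := hQup y
    have h2 := hlowP y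
    have h3 : CQ / c₁ ≤ L := le_max_right _ _
    have h4 : CQ * (y ⬝ᵥ y) ≤ (CQ / c₁) * (y ⬝ᵥ P.mulVec y) := by
      rw [div_mul_eq_mul_div, le_div_iff₀ hc₁]
      nlinarith
    have h5 : (CQ / c₁) * (y ⬝ᵥ P.mulVec y) ≤ L * (y ⬝ᵥ P.mulVec y) :=
      mul_le_mul_of_nonneg_right h3 (hPnn y)
    linarith
  set κ : ℝ := μ + β / 2 with hκdef
  have hκpos : 0 < κ := by rw [hκdef]; linarith
  set q : (Fin m → ℝ) → ℝ := fun θ => θ ⬝ᵥ P.mulVec θ with hqdef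
  have hq0 : q 0 = 0 := by simp [hqdef]
  have hqc : Continuous q := cont_quad P
  have hqtends : Tendsto q (nhds 0) (nhds 0) := by
    rw [← hq0]; exact hqc.tendsto 0
  set Bnd : (Fin m → ℝ) → ℝ :=
    fun θ => (Real.sqrt (q θ) + (q θ) ^ (κ / L)) / Real.sqrt c₁ with hBdef
  apply squeeze_zero'
  · filter_upwards with θ
    have hdn : 0 ≤ dnorm θ := by
      rcases eq_or_ne θ 0 with rfl | h
      · rw [hd0]
      · exact (hdpos θ h).le
    exact mul_nonneg (Real.rpow_nonneg hdn μ) (Real.sqrt_nonneg _)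
  · have hev : ∀ᶠ θ : Fin m → ℝ in nhds 0, q θ < 1 :=
      hqtends.eventually (Filter.Tendsto.eventually_lt_const one_pos tendsto_id) |>.mono fun _ h => h
    filter_upwards [hev] with θ hq1
    have hBnn : 0 ≤ Bnd θ := by
      have := hPnn θ
      have h1 : 0 ≤ Real.sqrt (q θ) := Real.sqrt_nonneg _
      have h2 : 0 ≤ (q θ) ^ (κ / L) := Real.rpow_nonneg this _
      positivity
    rcases eq_or_ne θ 0 with rfl | hθ
    · have : euclNorm (0 : Fin m → ℝ) = 0 := by
        simp [euclNorm, dotProduct]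
      rw [this, mul_zero]
      exact hBnn
    · obtain ⟨hd1, hdL, hdβ⟩ := key_estimate G P hPnn β L hβ hβL hlow hQle θ hθ
        (dnorm θ) (hdpos θ hθ) (hdspec θ hθ) hq1
      set d : ℝ := dnorm θ with hddef
      have hdpos' : 0 < d := hdpos θ hθ
      have hqnn : 0 ≤ q θ := hPnn θ
      have hEnn : 0 ≤ euclNorm θ := Real.sqrt_nonneg _
      have hEn : euclNorm θ ≤ Real.sqrt (q θ) / Real.sqrt c₁ := by
        have h1 : θ ⬝ᵥ θ ≤ q θ / c₁ := by
          rw [le_div_iff₀ hc₁]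
          nlinarith [hlowP θ]
        calc euclNorm θ ≤ Real.sqrt (q θ / c₁) := Real.sqrt_le_sqrt h1
          _ = Real.sqrt (q θ) / Real.sqrt c₁ := Real.sqrt_div hqnn c₁
      have hsq : 0 < Real.sqrt c₁ := Real.sqrt_pos.mpr hc₁
      have hrpnn : 0 ≤ (q θ) ^ (κ / L) := Real.rpow_nonneg hqnn _
      have hsqnn : 0 ≤ Real.sqrt (q θ) := Real.sqrt_nonneg _
      rcases le_or_gt 0 μ with hμ0 | hμ0
      · have hdμ : d ^ μ ≤ 1 := Real.rpow_le_one hdpos'.le hd1.le hμ0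
        calc d ^ μ * euclNorm θ ≤ 1 * euclNorm θ :=
              mul_le_mul_of_nonneg_right hdμ hEnn
          _ = euclNorm θ := one_mul _
          _ ≤ Real.sqrt (q θ) / Real.sqrt c₁ := hEn
          _ ≤ Bnd θ := by
              rw [hBdef]
              apply (div_le_div_iff_of_pos_right hsq).mpr ?_ |>.trans_eq rfl
              linarith
      · have hdμnn : 0 ≤ d ^ μ := Real.rpow_nonneg hdpos'.le _
        have h1 : Real.sqrt (q θ) ≤ d ^ (β / 2) := by
          have h2 : Real.sqrt (q θ) ≤ Real.sqrt (d ^ β) := Real.sqrt_le_sqrt hdβ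
          rwa [show Real.sqrt (d ^ β) = d ^ (β / 2) by
            rw [Real.sqrt_eq_rpow, ← Real.rpow_mul hdpos'.le]
            congr 1; ring ] at h2
        have h4 : d ^ μ * d ^ (β / 2) = d ^ κ := by
          rw [← Real.rpow_add hdpos', hκdef]
        have h5 : d ≤ (q θ) ^ (1 / L) := by
          have h6 := Real.rpow_le_rpow (Real.rpow_nonneg hdpos'.le L) hdL
            (le_of_lt (by positivity : (0:ℝ) < 1 / L))
          rwa [← Real.rpow_mul hdpos'.le, mul_one_div, div_self hLpos.ne',
            Real.rpow_one] at h6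
        have h6 : d ^ κ ≤ (q θ) ^ (κ / L) := by
          have h7 := Real.rpow_le_rpow hdpos'.le h5 hκpos.le
          rwa [← Real.rpow_mul hqnn, one_div, inv_mul_eq_div] at h7
        calc d ^ μ * euclNorm θ
            ≤ d ^ μ * (Real.sqrt (q θ) / Real.sqrt c₁) :=
              mul_le_mul_of_nonneg_left hEn hdμnn
          _ ≤ d ^ μ * (d ^ (β / 2) / Real.sqrt c₁) := by
              apply mul_le_mul_of_nonneg_left _ hdμnn
              exact (div_le_div_iff_of_pos_right hsq).mpr h1
          _ = d ^ κ / Real.sqrt c₁ := by rw [← h4]; ring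
          _ ≤ (q θ) ^ (κ / L) / Real.sqrt c₁ := (div_le_div_iff_of_pos_right hsq).mpr h6
          _ ≤ Bnd θ := by
              rw [hBdef]
              apply (div_le_div_iff_of_pos_right hsq).mpr ?_ |>.trans_eq rfl
              linarith
  · rw [hBdef]
    have h1 : Tendsto (fun θ : Fin m → ℝ => Real.sqrt (q θ)) (nhds 0) (nhds 0) := by
      have := Real.continuous_sqrt.tendsto 0
      rw [Real.sqrt_zero] at this
      exact this.comp hqtends
    have h2 : Tendsto (fun θ : Fin m → ℝ => (q θ) ^ (κ / L)) (nhds 0) (nhds 0) := by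
      have hca : ContinuousAt (fun x : ℝ => x ^ (κ / L)) 0 :=
        Real.continuousAt_rpow_const 0 (κ / L) (Or.inr (by positivity))
      have h0 : (0 : ℝ) ^ (κ / L) = 0 := Real.zero_rpow (by positivity)
      have := hca.tendsto.comp hqtends
      rwa [h0] at this
    have := (h1.add h2).div_const (Real.sqrt c₁)
    simpa using this
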